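/- Let X be a set and F₁, F₂ : X → ℝ bounded below, with β₁* < inf F₁, β₂* < inf F₂. If x* is a weak Pareto minimum of (F₁,F₂), then there exist weights w₁, w₂ > 0 with w₁ + w₂ = 1 such that x* minimizes x ↦ max{w₁(F₁(x) − β₁*), w₂(F₂(x) − β₂*)} over X; indeed one may take w₁ = (F₂(x*) − β₂*)/((F₁(x*) − β₁*) + (F₂(x*) − β₂*)) and w₂ = 1 − w₁. -/
import Mathlib

theorem stmt_13 (X : Type*) [Nonempty X] (F1 F2 : X → ℝ)
    (β1 β2 : ℝ)
    (hb1 : BddBelow (Set.range F1)) (hb2 : BddBelow (Set.range F2))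
    (hβ1 : β1 < ⨅ x, F1 x) (hβ2 : β2 < ⨅ x, F2 x)
    (xs : X)
    (hweak : ¬ ∃ x : X, F1 x < F1 xs ∧ F2 x < F2 xs) :
    ∃ w1 w2 : ℝ, 0 < w1 ∧ 0 < w2 ∧ w1 + w2 = 1 ∧
      w1 = (F2 xs - β2) / ((F1 xs - β1) + (F2 xs - β2)) ∧
      ∀ x : X,
        max (w1 * (F1 xs - β1)) (w2 * (F2 xs - β2)) ≤
          max (w1 * (F1 x - β1)) (w2 * (F2 x - β2)) := by
  have ha : ∀ x : X, 0 < F1 x - β1 := fun x =>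
    sub_pos.2 (lt_of_lt_of_le hβ1 (ciInf_le hb1 x))
  have hbb : ∀ x : X, 0 < F2 x - β2 := fun x =>
    sub_pos.2 (lt_of_lt_of_le hβ2 (ciInf_le hb2 x))
  set a := F1 xs - β1 with hadef
  set b := F2 xs - β2 with hbdef
  have ha0 : 0 < a := ha xs
  have hb0 : 0 < b := hbb xs
  have hab : 0 < a + b := by linarith
  refine ⟨b / (a + b), a / (a + b), div_pos hb0 hab, div_pos ha0 hab, ?_, rfl, ?_⟩
  · field_simp; ring
  · intro x
    have hkey : a ≤ F1 x - β1 ∨ b ≤ F2 x - β2 := by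
      by_contra h
      push_neg at h
      exact hweak ⟨x, by linarith [h.1], by linarith [h.2]⟩
    have heq : b / (a + b) * a = a / (a + b) * b := by ring
    have hmax : max (b / (a + b) * a) (a / (a + b) * b) = b / (a + b) * a := by
      rw [heq]; exact max_self _
    rw [hmax]
    rcases hkey with h | h
    · exact le_max_of_le_left (by
        have := mul_le_mul_of_nonneg_left h (le_of_lt (div_pos hb0 hab))
        linarith)
    · exact le_max_of_le_right (by
        rw [heq]
        have := mul_le_mul_of_nonneg_left h (le_of_lt (div_pos ha0 hab))
        linarith)
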